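/- Let Q(ℓ,w) and Q̃(ℓ,w), 0 ≤ w ≤ ℓ, be two families of row-substochastic real 𝒥×𝒥 matrices with recursions Π and Π̃, and let C_k be as in the comparison lemma (C_0 = 0 and C_k = sup{ Σ_{j∈𝒥} |Q_{ij}(ℓ,w) − Q̃_{ij}(ℓ,w)| : 0 ≤ w ≤ ℓ ≤ k−1, i ∈ 𝒥 } for k ≥ 1). Then for every γ > 0, all 0 ≤ v ≤ s, every i ∈ 𝒥 and every integer N ≥ 0, ∫_0^v Σ_{j∈𝒥} |p^c_{ij}(s,v') − p̃^c_{ij}(s,v')| dv' ≤ γ s · C_N + 2 Σ_{ℓ ≥ N+1} Poi_{γs}(ℓ). -/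

import Mathlib

open scoped BigOperators

noncomputable section

/-- The diagonal part of a matrix. -/
def diagPart {J : Type*} [DecidableEq J] (M : Matrix J J ℝ) : Matrix J J ℝ :=
  Matrix.of fun i j => if i = j then M i j else 0

/-- The off-diagonal part of a matrix. -/
def offdiagPart {J : Type*} [DecidableEq J] (M : Matrix J J ℝ) : Matrix J J ℝ :=
  M - diagPart M

/-- A matrix is row-substochastic if its entries are nonnegative and every row sum is ≤ 1. -/
def RowSubstochastic {J : Type*} [Fintype J] (M : Matrix J J ℝ) : Prop :=
  (∀ i j, 0 ≤ M i j) ∧ ∀ i, ∑ j, M i j ≤ 1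

/-- A matrix is row-stochastic if its entries are nonnegative and every row sum equals 1. -/
def RowStochastic {J : Type*} [Fintype J] (M : Matrix J J ℝ) : Prop :=
  (∀ i j, 0 ≤ M i j) ∧ ∀ i, ∑ j, M i j = 1

/-- The matrices `Π(k,v)` produced by the recursion from the family `Q(ℓ,w)`:
`Π(0,0) = I`, `Π(k,v) = 0` for `v > k`,
`Π(k,0) = ∑_{k'=0}^{k-1} Π(k-1,k') Qⁿ(k-1,k')` for `k ≥ 1`, and
`Π(k,v) = Π(k-1,v-1) Q^d(k-1,v-1)` for `k ≥ v ≥ 1`. -/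
def PiRec {J : Type*} [Fintype J] [DecidableEq J]
    (Q : ℕ → ℕ → Matrix J J ℝ) : ℕ → ℕ → Matrix J J ℝ
  | 0, v => if v = 0 then 1 else 0
  | (k+1), v =>
      if v = 0 then ∑ k' ∈ Finset.range (k+1), PiRec Q k k' * offdiagPart (Q k k')
      else if v ≤ k + 1 then PiRec Q k (v-1) * diagPart (Q k (v-1)) else 0

/-- `C_k`: `C_0 = 0` and, for `k ≥ 1`,
`C_k = sup { ∑_j |Q_{ij}(ℓ,w) − Q̃_{ij}(ℓ,w)| : 0 ≤ w ≤ ℓ ≤ k−1, i ∈ 𝒥 }`. -/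
def Cconst {J : Type*} [Fintype J] (Q Q' : ℕ → ℕ → Matrix J J ℝ) (k : ℕ) : ℝ :=
  sSup {x : ℝ | ∃ ℓ w, ∃ i : J, w ≤ ℓ ∧ ℓ < k ∧ x = ∑ j, |Q ℓ w i j - Q' ℓ w i j|}

/-- `Poi_λ(k) = e^{−λ} λ^k / k!`. -/
def Poi (lam : ℝ) (k : ℕ) : ℝ := Real.exp (-lam) * lam ^ k / (Nat.factorial k)

/-- `Erl_{k,γ}(x) = γ (γx)^{k−1} e^{−γx} / (k−1)!` (intended for `k ≥ 1`). -/
def Erl (k : ℕ) (γ x : ℝ) : ℝ :=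
  γ * (γ * x) ^ (k - 1) * Real.exp (-(γ * x)) / (Nat.factorial (k - 1))

/-- Atomic part of the approximate transition probabilities:
`p^a_{ij}(s) = 1_{i=j} ∑_{ℓ≥0} Poi_{γs}(ℓ) Π_{ii}(ℓ,ℓ)`. -/
def pAtom {J : Type*} [Fintype J] [DecidableEq J] (γ : ℝ)
    (Pi : ℕ → ℕ → Matrix J J ℝ) (s : ℝ) (i j : J) : ℝ :=
  (if i = j then 1 else 0) * ∑' ℓ : ℕ, Poi (γ * s) ℓ * Pi ℓ ℓ i i

/-- Absolutely continuous part of the approximate transition probabilities: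
`p^c_{ij}(s,v) = ∑_{ℓ≥1} ∑_{w=0}^{ℓ−1} Erl_{ℓ−w,γ}(s−v) Poi_{γv}(w) Π_{ij}(ℓ,w)`. -/
def pCont {J : Type*} [Fintype J] (γ : ℝ)
    (Pi : ℕ → ℕ → Matrix J J ℝ) (s v : ℝ) (i j : J) : ℝ :=
  ∑' ℓ : ℕ, ∑ w ∈ Finset.range ℓ, Erl (ℓ - w) γ (s - v) * Poi (γ * v) w * Pi ℓ w i j


set_option maxHeartbeats 1000000

lemma Poi_nonneg {lam : ℝ} (h : 0 ≤ lam) (k : ℕ) : 0 ≤ Poi lam k := by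
  unfold Poi; positivity

lemma Erl_nonneg {γ x : ℝ} (hγ : 0 ≤ γ) (hx : 0 ≤ x) (k : ℕ) : 0 ≤ Erl k γ x := by
  unfold Erl; positivity

lemma Poi_eq (lam : ℝ) (k : ℕ) : Poi lam k = Real.exp (-lam) * (lam ^ k / (Nat.factorial k)) := by
  unfold Poi; ring

lemma summable_Poi (lam : ℝ) : Summable (Poi lam) := by
  have h : Poi lam = fun k => Real.exp (-lam) * (lam ^ k / (Nat.factorial k)) :=
    funext (Poi_eq lam)
  rw [h]
  exact (Real.summable_pow_div_factorial lam).mul_left _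

lemma tsum_Poi (lam : ℝ) : ∑' k, Poi lam k = 1 := by
  simp only [Poi_eq]
  rw [tsum_mul_left]
  have h : ∑' k : ℕ, lam ^ k / (Nat.factorial k : ℝ) = Real.exp lam := by
    rw [Real.exp_eq_exp_ℝ, NormedSpace.exp_eq_tsum_div]
  rw [h, ← Real.exp_add]
  simp

lemma Erl_eq_Poi (k : ℕ) (γ x : ℝ) : Erl k γ x = γ * Poi (γ * x) (k - 1) := by
  unfold Erl Poi; ring

lemma Poi_conv (α β : ℝ) (m : ℕ) :
    ∑ w ∈ Finset.range (m + 1), Poi α (m - w) * Poi β w = Poi (α + β) m := by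
  have key : ∀ w ∈ Finset.range (m + 1), Poi α (m - w) * Poi β w
      = Real.exp (-(α + β)) / (Nat.factorial m) * (β ^ w * α ^ (m - w) * (m.choose w : ℝ)) := by
    intro w hw
    have hwm : w ≤ m := Nat.lt_succ_iff.mp (Finset.mem_range.mp hw)
    have hfac : ((m.choose w : ℝ) * (Nat.factorial w) * (Nat.factorial (m - w))) = (Nat.factorial m) := by
      exact_mod_cast Nat.choose_mul_factorial_mul_factorial hwm
    unfold Poi
    rw [neg_add, Real.exp_add]
    have h1 : (Nat.factorial (m - w) : ℝ) ≠ 0 := by exact_mod_cast (Nat.factorial_ne_zero _)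
    have h2 : (Nat.factorial w : ℝ) ≠ 0 := by exact_mod_cast (Nat.factorial_ne_zero _)
    have h3 : (Nat.factorial m : ℝ) ≠ 0 := by exact_mod_cast (Nat.factorial_ne_zero _)
    field_simp
    rw [← hfac]
    ring
  rw [Finset.sum_congr rfl key, ← Finset.mul_sum, ← add_pow]
  unfold Poi
  rw [add_comm β α]
  ring

lemma tsum_nat_mul_Poi (lam : ℝ) : ∑' k : ℕ, (k : ℝ) * Poi lam k = lam := by
  have hsh : ∀ k : ℕ, ((k + 1 : ℕ) : ℝ) * Poi lam (k + 1) = lam * Poi lam k := by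
    intro k
    unfold Poi
    have h1 : (Nat.factorial (k+1) : ℝ) = (k+1) * Nat.factorial k := by
      exact_mod_cast Nat.factorial_succ k
    rw [h1]
    have h2 : (Nat.factorial k : ℝ) ≠ 0 := by exact_mod_cast (Nat.factorial_ne_zero _)
    have h3 : ((k:ℝ) + 1) ≠ 0 := by positivity
    field_simp
    push_cast
    ring
  have hsum : Summable (fun k : ℕ => (k : ℝ) * Poi lam k) := by
    rw [← summable_nat_add_iff 1]
    refine ((summable_Poi lam).mul_left lam).congr fun n => ?_
    simpa using (hsh n).symm
  rw [Summable.tsum_eq_zero_add hsum]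
  simp only [Nat.cast_zero, zero_mul, zero_add]
  calc ∑' k : ℕ, ((k + 1 : ℕ) : ℝ) * Poi lam (k + 1)
      = ∑' k : ℕ, lam * Poi lam k := by exact tsum_congr hsh
    _ = lam * ∑' k, Poi lam k := tsum_mul_left
    _ = lam := by rw [tsum_Poi]; ring

lemma beta_nat (s : ℝ) : ∀ (k w : ℕ), (∫ x in (0:ℝ)..s, x ^ w * (s - x) ^ k)
    = (Nat.factorial w * Nat.factorial k / Nat.factorial (w + k + 1)) * s ^ (w + k + 1) := by
  intro k
  induction k with
  | zero =>
      intro w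
      simp only [pow_zero, mul_one, integral_pow, Nat.factorial_zero, Nat.cast_one, mul_one,
        Nat.add_zero]
      have : (Nat.factorial (w + 1) : ℝ) = (w + 1) * Nat.factorial w := by
        exact_mod_cast Nat.factorial_succ w
      rw [this]
      have h2 : (Nat.factorial w : ℝ) ≠ 0 := by exact_mod_cast Nat.factorial_ne_zero w
      have h3 : ((w : ℝ) + 1) ≠ 0 := by positivity
      field_simp
      ring
  | succ k ih =>
      intro w
      have hw1 : ((w : ℝ) + 1) ≠ 0 := by positivity
      -- integration by parts
      set u : ℝ → ℝ := fun x => x ^ (w + 1) / ((w : ℝ) + 1) with hu_def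
      set v : ℝ → ℝ := fun x => (s - x) ^ (k + 1) with hv_def
      have hu : ∀ x ∈ Set.uIcc (0:ℝ) s, HasDerivAt u (x ^ w) x := by
        intro x _
        have h := (hasDerivAt_pow (w + 1) x).div_const ((w : ℝ) + 1)
        refine h.congr_deriv ?_
        rw [Nat.add_sub_cancel]; push_cast; field_simp
      have hv : ∀ x ∈ Set.uIcc (0:ℝ) s, HasDerivAt v (-(((k:ℝ) + 1) * (s - x) ^ k)) x := by
        intro x _
        have h1 : HasDerivAt (fun x : ℝ => s - x) (-1) x := by
          simpa using (hasDerivAt_id' x).const_sub s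
        have h := (hasDerivAt_pow (k + 1) (s - x)).comp x h1
        refine h.congr_deriv ?_
        rw [Nat.add_sub_cancel]; push_cast; ring
      have hiu : IntervalIntegrable (fun x : ℝ => x ^ w) MeasureTheory.volume 0 s :=
        (continuous_pow w).intervalIntegrable _ _
      have hiv : IntervalIntegrable (fun x : ℝ => -(((k:ℝ) + 1) * (s - x) ^ k))
          MeasureTheory.volume 0 s := by
        apply Continuous.intervalIntegrable
        continuity
      have hparts := intervalIntegral.integral_mul_deriv_eq_deriv_mul hu hv hiu hiv
      -- hparts : ∫ u x * v' x = u s * v s - u 0 * v 0 - ∫ x^w * v x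
      have hus : u s * v s = 0 := by simp [hu_def, hv_def]
      have hu0 : u 0 * v 0 = 0 := by simp [hu_def, hv_def]
      have lhs_eq : (∫ x in (0:ℝ)..s, u x * (-(((k:ℝ) + 1) * (s - x) ^ k)))
          = -(((k:ℝ) + 1) / ((w:ℝ) + 1)) * ∫ x in (0:ℝ)..s, x ^ (w + 1) * (s - x) ^ k := by
        rw [← intervalIntegral.integral_const_mul]
        apply intervalIntegral.integral_congr
        intro x _
        simp only [hu_def]
        field_simp
      rw [lhs_eq, hus, hu0, ih (w + 1)] at hparts
      have goal_eq : (∫ x in (0:ℝ)..s, x ^ w * (s - x) ^ (k + 1)) = ∫ x in (0:ℝ)..s, x ^ w * v x := by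
        apply intervalIntegral.integral_congr; intro x _; rfl
      rw [goal_eq]
      have := hparts
      -- this : -(k+1)/(w+1) * ((w+1)! * k!/(w+1+k+1)!) * s^(w+1+k+1) = 0 - 0 - ∫ x^w * v x
      have hrw : (∫ x in (0:ℝ)..s, x ^ w * v x)
          = (((k:ℝ) + 1) / ((w:ℝ) + 1)) * ((Nat.factorial (w+1) * Nat.factorial k / Nat.factorial (w + 1 + k + 1)) * s ^ (w + 1 + k + 1)) := by
        linarith [this]
      rw [hrw]
      have e1 : (Nat.factorial (w + 1) : ℝ) = (w + 1) * Nat.factorial w := by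
        exact_mod_cast Nat.factorial_succ w
      have e2 : (Nat.factorial (k + 1) : ℝ) = (k + 1) * Nat.factorial k := by
        exact_mod_cast Nat.factorial_succ k
      have e3 : w + 1 + k + 1 = w + (k + 1) + 1 := by omega
      rw [e3, e1, e2]
      have h2 : (Nat.factorial w : ℝ) ≠ 0 := by exact_mod_cast Nat.factorial_ne_zero w
      have h3 : (Nat.factorial k : ℝ) ≠ 0 := by exact_mod_cast Nat.factorial_ne_zero k
      have h4 : (Nat.factorial (w + (k+1) + 1) : ℝ) ≠ 0 := by
        exact_mod_cast Nat.factorial_ne_zero _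
      have h5 : ((k:ℝ) + 1) ≠ 0 := by positivity
      field_simp

lemma key_integral' {γ s v : ℝ} (hγ : 0 < γ) (hv : 0 ≤ v) (hvs : v ≤ s) (w k : ℕ) :
    (∫ x in (0:ℝ)..v, Erl (k + 1) γ (s - x) * Poi (γ * x) w) ≤ Poi (γ * s) (w + k + 1) := by
  have hs : 0 ≤ s := le_trans hv hvs
  set c : ℝ := Real.exp (-(γ * s)) * γ ^ (k + 1 + w) / (Nat.factorial k * Nat.factorial w) with hc
  have hfun : ∀ x : ℝ, Erl (k + 1) γ (s - x) * Poi (γ * x) w = c * (x ^ w * (s - x) ^ k) := by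
    intro x
    have hexp : Real.exp (-(γ * (s - x))) * Real.exp (-(γ * x)) = Real.exp (-(γ * s)) := by
      rw [← Real.exp_add]
      congr 1
      ring
    calc Erl (k + 1) γ (s - x) * Poi (γ * x) w
        = (Real.exp (-(γ * (s - x))) * Real.exp (-(γ * x))) *
            (γ ^ (k + 1 + w) * (x ^ w * (s - x) ^ k) / (Nat.factorial k * Nat.factorial w)) := by
          unfold Erl Poi
          simp only [Nat.add_sub_cancel]
          rw [mul_pow, mul_pow]
          ring
      _ = c * (x ^ w * (s - x) ^ k) := by rw [hexp, hc]; ring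
  have hc0 : 0 ≤ c := by rw [hc]; positivity
  have hint : ∀ a b : ℝ, IntervalIntegrable (fun x : ℝ => x ^ w * (s - x) ^ k)
      MeasureTheory.volume a b := by
    intro a b
    apply Continuous.intervalIntegrable
    continuity
  have hsplit : (∫ x in (0:ℝ)..v, x ^ w * (s - x) ^ k) ≤ ∫ x in (0:ℝ)..s, x ^ w * (s - x) ^ k := by
    have hadd := intervalIntegral.integral_add_adjacent_intervals (hint 0 v) (hint v s)
    have hpos : 0 ≤ ∫ x in v..s, x ^ w * (s - x) ^ k := by
      apply intervalIntegral.integral_nonneg hvs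
      intro x hx
      have h1 : 0 ≤ x := le_trans hv hx.1
      have h2 : 0 ≤ s - x := by linarith [hx.2]
      positivity
    linarith
  calc (∫ x in (0:ℝ)..v, Erl (k + 1) γ (s - x) * Poi (γ * x) w)
      = ∫ x in (0:ℝ)..v, c * (x ^ w * (s - x) ^ k) := by
        apply intervalIntegral.integral_congr; intro x _; exact hfun x
    _ = c * ∫ x in (0:ℝ)..v, x ^ w * (s - x) ^ k := intervalIntegral.integral_const_mul _ _
    _ ≤ c * ∫ x in (0:ℝ)..s, x ^ w * (s - x) ^ k := by
        exact mul_le_mul_of_nonneg_left hsplit hc0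
    _ = Poi (γ * s) (w + k + 1) := by
        rw [beta_nat s k w]
        unfold Poi
        rw [mul_pow]
        have h2 : (Nat.factorial w : ℝ) ≠ 0 := by exact_mod_cast Nat.factorial_ne_zero w
        have h3 : (Nat.factorial k : ℝ) ≠ 0 := by exact_mod_cast Nat.factorial_ne_zero k
        have h4 : (Nat.factorial (w + k + 1) : ℝ) ≠ 0 := by
          exact_mod_cast Nat.factorial_ne_zero _
        rw [hc, show k + 1 + w = w + k + 1 from by omega]
        field_simp

set_option linter.unusedSectionVars false
section MatrixPart
variable {J : Type*} [Fintype J] [DecidableEq J]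

lemma diagPart_apply (M : Matrix J J ℝ) (i j : J) :
    diagPart M i j = if i = j then M i j else 0 := rfl

lemma offdiagPart_apply (M : Matrix J J ℝ) (i j : J) :
    offdiagPart M i j = if i = j then 0 else M i j := by
  simp only [offdiagPart, Matrix.sub_apply, diagPart_apply]
  split <;> ring

lemma offdiagPart_nonneg {M : Matrix J J ℝ} (hM : ∀ i j, 0 ≤ M i j) (i j : J) :
    0 ≤ offdiagPart M i j := by
  rw [offdiagPart_apply]; split
  · exact le_rfl
  · exact hM i j

lemma diagPart_nonneg {M : Matrix J J ℝ} (hM : ∀ i j, 0 ≤ M i j) (i j : J) :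
    0 ≤ diagPart M i j := by
  rw [diagPart_apply]; split
  · exact hM i j
  · exact le_rfl

lemma rowsum_offdiag_add_diag (M : Matrix J J ℝ) (m : J) :
    (∑ j, offdiagPart M m j) + (∑ j, diagPart M m j) = ∑ j, M m j := by
  rw [← Finset.sum_add_distrib]
  refine Finset.sum_congr rfl fun j _ => ?_
  rw [offdiagPart_apply, diagPart_apply]
  split <;> ring

lemma rowsum_absdiff_offdiag_add_diag (M M' : Matrix J J ℝ) (m : J) :
    (∑ j, |offdiagPart M m j - offdiagPart M' m j|)
      + (∑ j, |diagPart M m j - diagPart M' m j|) = ∑ j, |M m j - M' m j| := by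
  rw [← Finset.sum_add_distrib]
  refine Finset.sum_congr rfl fun j _ => ?_
  rw [offdiagPart_apply, offdiagPart_apply, diagPart_apply, diagPart_apply]
  split <;> simp

lemma sum_mul_apply (A B : Matrix J J ℝ) (i : J) :
    ∑ j, (A * B) i j = ∑ m, A i m * ∑ j, B m j := by
  simp only [Matrix.mul_apply, Finset.mul_sum]
  exact Finset.sum_comm

lemma abs_diff_mul_row (A A' B B' : Matrix J J ℝ) (hB : ∀ m j, 0 ≤ B m j)
    (hA' : ∀ m j, 0 ≤ A' m j) (i : J) :
    ∑ j, |(A * B) i j - (A' * B') i j| ≤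
      (∑ m, |A i m - A' i m| * ∑ j, B m j) + ∑ m, A' i m * ∑ j, |B m j - B' m j| := by
  have h1 : ∀ j, |(A * B) i j - (A' * B') i j| ≤
      ∑ m, (|A i m - A' i m| * B m j + A' i m * |B m j - B' m j|) := by
    intro j
    rw [Matrix.mul_apply, Matrix.mul_apply, ← Finset.sum_sub_distrib]
    refine (Finset.abs_sum_le_sum_abs _ _).trans (Finset.sum_le_sum fun m _ => ?_)
    have he : A i m * B m j - A' i m * B' m j
        = (A i m - A' i m) * B m j + A' i m * (B m j - B' m j) := by ring
    rw [he]
    refine (abs_add_le _ _).trans ?_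
    rw [abs_mul, abs_mul, abs_of_nonneg (hB m j), abs_of_nonneg (hA' i m)]
  calc ∑ j, |(A * B) i j - (A' * B') i j|
      ≤ ∑ j, ∑ m, (|A i m - A' i m| * B m j + A' i m * |B m j - B' m j|) :=
        Finset.sum_le_sum fun j _ => h1 j
    _ = (∑ m, |A i m - A' i m| * ∑ j, B m j) + ∑ m, A' i m * ∑ j, |B m j - B' m j| := by
        rw [Finset.sum_comm]
        rw [show (∑ m, ∑ j, (|A i m - A' i m| * B m j + A' i m * |B m j - B' m j|))
            = ∑ m, ((|A i m - A' i m| * ∑ j, B m j) + A' i m * ∑ j, |B m j - B' m j|) from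
          Finset.sum_congr rfl fun m _ => by
            rw [Finset.sum_add_distrib, ← Finset.mul_sum, ← Finset.mul_sum]]
        exact Finset.sum_add_distrib

variable (Q Q' : ℕ → ℕ → Matrix J J ℝ)

lemma PiRec_zero_zero : PiRec Q 0 0 = 1 := by simp [PiRec]

lemma PiRec_zero_of_pos {v : ℕ} (h : v ≠ 0) : PiRec Q 0 v = 0 := by simp [PiRec, h]

lemma PiRec_succ_zero (k : ℕ) :
    PiRec Q (k+1) 0 = ∑ k' ∈ Finset.range (k+1), PiRec Q k k' * offdiagPart (Q k k') := by
  simp [PiRec]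

lemma PiRec_succ_succ {k v : ℕ} (h : v ≤ k) :
    PiRec Q (k+1) (v+1) = PiRec Q k v * diagPart (Q k v) := by
  have h1 : v + 1 ≤ k + 1 := by omega
  simp [PiRec, h1]

lemma PiRec_succ_of_gt {k v : ℕ} (h : ¬ (v + 1 ≤ k + 1)) : PiRec Q (k+1) (v+1) = 0 := by
  simp [PiRec, h]

lemma piRec_nonneg (hQ : ∀ ℓ w, w ≤ ℓ → RowSubstochastic (Q ℓ w)) :
    ∀ k v i j, 0 ≤ PiRec Q k v i j := by
  intro k
  induction k with
  | zero =>
      intro v i j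
      match v with
      | 0 =>
        rw [PiRec_zero_zero, Matrix.one_apply]
        split <;> norm_num
      | v + 1 =>
        rw [PiRec_zero_of_pos Q (Nat.succ_ne_zero v)]
        simp
  | succ k ih =>
      intro v i j
      match v with
      | 0 =>
        rw [PiRec_succ_zero, Matrix.sum_apply]
        refine Finset.sum_nonneg fun k' hk' => ?_
        rw [Matrix.mul_apply]
        refine Finset.sum_nonneg fun m _ => mul_nonneg (ih k' i m) ?_
        exact offdiagPart_nonneg (hQ k k' (Nat.lt_succ_iff.mp (Finset.mem_range.mp hk'))).1 m j
      | v + 1 =>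
        by_cases h : v + 1 ≤ k + 1
        · rw [PiRec_succ_succ Q (by omega : v ≤ k), Matrix.mul_apply]
          refine Finset.sum_nonneg fun m _ => mul_nonneg (ih v i m) ?_
          exact diagPart_nonneg (hQ k v (by omega)).1 m j
        · rw [PiRec_succ_of_gt Q h]
          simp

lemma piRec_rowsum (hQ : ∀ ℓ w, w ≤ ℓ → RowSubstochastic (Q ℓ w)) :
    ∀ k i, ∑ v ∈ Finset.range (k+1), ∑ j, PiRec Q k v i j ≤ 1 := by
  intro k
  induction k with
  | zero =>
      intro i
      rw [Finset.sum_range_one, PiRec_zero_zero]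
      simp [Matrix.one_apply]
  | succ k ih =>
      intro i
      rw [Finset.sum_range_succ']
      have h0 : ∑ j, PiRec Q (k+1) 0 i j
          = ∑ k' ∈ Finset.range (k+1), ∑ m, PiRec Q k k' i m * ∑ j, offdiagPart (Q k k') m j := by
        rw [PiRec_succ_zero]
        rw [show (∑ j, (∑ k' ∈ Finset.range (k+1), PiRec Q k k' * offdiagPart (Q k k')) i j)
            = ∑ k' ∈ Finset.range (k+1), ∑ j, (PiRec Q k k' * offdiagPart (Q k k')) i j from by
          rw [Finset.sum_comm]
          exact Finset.sum_congr rfl fun j _ => Matrix.sum_apply i j _ _]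
        exact Finset.sum_congr rfl fun k' _ => sum_mul_apply _ _ i
      have hsucc : ∀ v, v ≤ k → ∑ j, PiRec Q (k+1) (v+1) i j
          = ∑ m, PiRec Q k v i m * ∑ j, diagPart (Q k v) m j := by
        intro v hv
        rw [PiRec_succ_succ Q hv]
        exact sum_mul_apply _ _ i
      calc (∑ v ∈ Finset.range (k+1), ∑ j, PiRec Q (k+1) (v+1) i j) + ∑ j, PiRec Q (k+1) 0 i j
          = ∑ v ∈ Finset.range (k+1), (∑ m, PiRec Q k v i m *
              ((∑ j, diagPart (Q k v) m j) + (∑ j, offdiagPart (Q k v) m j))) := by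
            rw [h0]
            rw [show (∑ v ∈ Finset.range (k+1), ∑ j, PiRec Q (k+1) (v+1) i j)
                = ∑ v ∈ Finset.range (k+1), ∑ m, PiRec Q k v i m * ∑ j, diagPart (Q k v) m j from
              Finset.sum_congr rfl fun v hv =>
                hsucc v (Nat.lt_succ_iff.mp (Finset.mem_range.mp hv))]
            rw [← Finset.sum_add_distrib]
            refine Finset.sum_congr rfl fun v _ => ?_
            rw [← Finset.sum_add_distrib]
            exact Finset.sum_congr rfl fun m _ => by ring
        _ ≤ ∑ v ∈ Finset.range (k+1), ∑ m, PiRec Q k v i m := by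
            refine Finset.sum_le_sum fun v hv => Finset.sum_le_sum fun m _ => ?_
            have hvk : v ≤ k := Nat.lt_succ_iff.mp (Finset.mem_range.mp hv)
            have hrow : (∑ j, diagPart (Q k v) m j) + (∑ j, offdiagPart (Q k v) m j) ≤ 1 := by
              rw [add_comm, rowsum_offdiag_add_diag]
              exact (hQ k v hvk).2 m
            have hnn := piRec_nonneg Q hQ k v i m
            calc PiRec Q k v i m * ((∑ j, diagPart (Q k v) m j) + ∑ j, offdiagPart (Q k v) m j)
                ≤ PiRec Q k v i m * 1 := mul_le_mul_of_nonneg_left hrow hnn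
              _ = PiRec Q k v i m := mul_one _
        _ ≤ 1 := ih i

lemma piRec_rowsum_single (hQ : ∀ ℓ w, w ≤ ℓ → RowSubstochastic (Q ℓ w))
    {k v : ℕ} (hv : v ≤ k) (i : J) : ∑ j, PiRec Q k v i j ≤ 1 := by
  have h := piRec_rowsum Q hQ k i
  refine le_trans ?_ h
  refine Finset.single_le_sum (f := fun v => ∑ j, PiRec Q k v i j) ?_ ?_
  · intro w _
    exact Finset.sum_nonneg fun j _ => piRec_nonneg Q hQ k w i j
  · exact Finset.mem_range.mpr (by omega)

lemma piRec_entry_le_one (hQ : ∀ ℓ w, w ≤ ℓ → RowSubstochastic (Q ℓ w))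
    {k v : ℕ} (hv : v ≤ k) (i j : J) : PiRec Q k v i j ≤ 1 := by
  refine le_trans ?_ (piRec_rowsum_single Q hQ hv i)
  exact Finset.single_le_sum (fun m _ => piRec_nonneg Q hQ k v i m) (Finset.mem_univ j)

lemma Cconst_mem_le_two (hQ : ∀ ℓ w, w ≤ ℓ → RowSubstochastic (Q ℓ w))
    (hQ' : ∀ ℓ w, w ≤ ℓ → RowSubstochastic (Q' ℓ w)) {k : ℕ} :
    ∀ x ∈ {x : ℝ | ∃ ℓ w, ∃ i : J, w ≤ ℓ ∧ ℓ < k ∧ x = ∑ j, |Q ℓ w i j - Q' ℓ w i j|}, x ≤ 2 := by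
  rintro x ⟨ℓ, w, i, hwl, _, rfl⟩
  calc ∑ j, |Q ℓ w i j - Q' ℓ w i j| ≤ ∑ j, (Q ℓ w i j + Q' ℓ w i j) := by
        refine Finset.sum_le_sum fun j _ => ?_
        have := (hQ ℓ w hwl).1 i j
        have := (hQ' ℓ w hwl).1 i j
        rw [abs_sub_le_iff]
        constructor <;> linarith
    _ = (∑ j, Q ℓ w i j) + ∑ j, Q' ℓ w i j := Finset.sum_add_distrib
    _ ≤ 1 + 1 := add_le_add ((hQ ℓ w hwl).2 i) ((hQ' ℓ w hwl).2 i)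
    _ = 2 := by norm_num

lemma le_Cconst (hQ : ∀ ℓ w, w ≤ ℓ → RowSubstochastic (Q ℓ w))
    (hQ' : ∀ ℓ w, w ≤ ℓ → RowSubstochastic (Q' ℓ w)) {ℓ w k : ℕ}
    (hwl : w ≤ ℓ) (hlk : ℓ < k) (i : J) :
    ∑ j, |Q ℓ w i j - Q' ℓ w i j| ≤ Cconst Q Q' k :=
  le_csSup ⟨2, Cconst_mem_le_two Q Q' hQ hQ'⟩ ⟨ℓ, w, i, hwl, hlk, rfl⟩

lemma Cconst_nonneg [Nonempty J] (hQ : ∀ ℓ w, w ≤ ℓ → RowSubstochastic (Q ℓ w))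
    (hQ' : ∀ ℓ w, w ≤ ℓ → RowSubstochastic (Q' ℓ w)) (k : ℕ) : 0 ≤ Cconst Q Q' k := by
  match k with
  | 0 =>
    have : {x : ℝ | ∃ ℓ w, ∃ i : J, w ≤ ℓ ∧ ℓ < 0 ∧ x = ∑ j, |Q ℓ w i j - Q' ℓ w i j|} = ∅ := by
      ext x; simp
    rw [Cconst, this, Real.sSup_empty]
  | k + 1 =>
    have i : J := Classical.arbitrary J
    refine le_trans (Finset.sum_nonneg fun j _ => abs_nonneg _) (le_Cconst Q Q' hQ hQ'
      (le_refl 0) (Nat.succ_pos k) i)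

lemma Cconst_mono [Nonempty J] (hQ : ∀ ℓ w, w ≤ ℓ → RowSubstochastic (Q ℓ w))
    (hQ' : ∀ ℓ w, w ≤ ℓ → RowSubstochastic (Q' ℓ w)) {k k' : ℕ} (h : k ≤ k') :
    Cconst Q Q' k ≤ Cconst Q Q' k' := by
  match k with
  | 0 =>
    have : {x : ℝ | ∃ ℓ w, ∃ i : J, w ≤ ℓ ∧ ℓ < 0 ∧ x = ∑ j, |Q ℓ w i j - Q' ℓ w i j|} = ∅ := by
      ext x; simp
    rw [Cconst, this, Real.sSup_empty]
    exact Cconst_nonneg Q Q' hQ hQ' k'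
  | k + 1 =>
    refine csSup_le_csSup ⟨2, Cconst_mem_le_two Q Q' hQ hQ'⟩
      ⟨∑ j, |Q 0 0 (Classical.arbitrary J) j - Q' 0 0 (Classical.arbitrary J) j|,
        0, 0, Classical.arbitrary J, le_refl 0, Nat.succ_pos k, rfl⟩ ?_
    rintro x ⟨ℓ, w, i, hwl, hlk, rfl⟩
    exact ⟨ℓ, w, i, hwl, by omega, rfl⟩

lemma piRec_diff (hQ : ∀ ℓ w, w ≤ ℓ → RowSubstochastic (Q ℓ w))
    (hQ' : ∀ ℓ w, w ≤ ℓ → RowSubstochastic (Q' ℓ w)) [Nonempty J] :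
    ∀ k i, ∑ v ∈ Finset.range (k+1), ∑ j, |PiRec Q k v i j - PiRec Q' k v i j|
      ≤ k * Cconst Q Q' k := by
  intro k
  induction k with
  | zero =>
      intro i
      rw [Finset.sum_range_one, PiRec_zero_zero, PiRec_zero_zero]
      simp
  | succ k ih =>
      intro i
      rw [Finset.sum_range_succ']
      -- bound the v+1 terms
      have hsucc : ∀ v, v ≤ k → ∑ j, |PiRec Q (k+1) (v+1) i j - PiRec Q' (k+1) (v+1) i j|
          ≤ (∑ m, |PiRec Q k v i m - PiRec Q' k v i m| * ∑ j, diagPart (Q k v) m j)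
            + ∑ m, PiRec Q' k v i m * ∑ j, |diagPart (Q k v) m j - diagPart (Q' k v) m j| := by
        intro v hv
        rw [PiRec_succ_succ Q hv, PiRec_succ_succ Q' hv]
        exact abs_diff_mul_row _ _ _ _ (fun m j => diagPart_nonneg (hQ k v hv).1 m j)
          (fun m j => piRec_nonneg Q' hQ' k v m j) i
      have h0 : ∑ j, |PiRec Q (k+1) 0 i j - PiRec Q' (k+1) 0 i j|
          ≤ ∑ k' ∈ Finset.range (k+1),
              ((∑ m, |PiRec Q k k' i m - PiRec Q' k k' i m| * ∑ j, offdiagPart (Q k k') m j)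
                + ∑ m, PiRec Q' k k' i m *
                    ∑ j, |offdiagPart (Q k k') m j - offdiagPart (Q' k k') m j|) := by
        rw [PiRec_succ_zero, PiRec_succ_zero]
        calc ∑ j, |(∑ k' ∈ Finset.range (k+1), PiRec Q k k' * offdiagPart (Q k k')) i j
                - (∑ k' ∈ Finset.range (k+1), PiRec Q' k k' * offdiagPart (Q' k k')) i j|
            ≤ ∑ j, ∑ k' ∈ Finset.range (k+1),
                |(PiRec Q k k' * offdiagPart (Q k k')) i j
                  - (PiRec Q' k k' * offdiagPart (Q' k k')) i j| := by
              refine Finset.sum_le_sum fun j _ => ?_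
              rw [Matrix.sum_apply, Matrix.sum_apply, ← Finset.sum_sub_distrib]
              exact Finset.abs_sum_le_sum_abs _ _
          _ = ∑ k' ∈ Finset.range (k+1), ∑ j,
                |(PiRec Q k k' * offdiagPart (Q k k')) i j
                  - (PiRec Q' k k' * offdiagPart (Q' k k')) i j| := Finset.sum_comm
          _ ≤ _ := by
              refine Finset.sum_le_sum fun k' hk' => ?_
              have hk'k : k' ≤ k := Nat.lt_succ_iff.mp (Finset.mem_range.mp hk')
              exact abs_diff_mul_row _ _ _ _
                (fun m j => offdiagPart_nonneg (hQ k k' hk'k).1 m j)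
                (fun m j => piRec_nonneg Q' hQ' k k' m j) i
      have combine : (∑ v ∈ Finset.range (k+1),
            ∑ j, |PiRec Q (k+1) (v+1) i j - PiRec Q' (k+1) (v+1) i j|)
          + ∑ j, |PiRec Q (k+1) 0 i j - PiRec Q' (k+1) 0 i j|
          ≤ ∑ v ∈ Finset.range (k+1),
              ((∑ m, |PiRec Q k v i m - PiRec Q' k v i m| * ∑ j, Q k v m j)
                + ∑ m, PiRec Q' k v i m * ∑ j, |Q k v m j - Q' k v m j|) := by
        calc (∑ v ∈ Finset.range (k+1),
                ∑ j, |PiRec Q (k+1) (v+1) i j - PiRec Q' (k+1) (v+1) i j|)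
              + ∑ j, |PiRec Q (k+1) 0 i j - PiRec Q' (k+1) 0 i j|
            ≤ (∑ v ∈ Finset.range (k+1),
                ((∑ m, |PiRec Q k v i m - PiRec Q' k v i m| * ∑ j, diagPart (Q k v) m j)
                  + ∑ m, PiRec Q' k v i m * ∑ j, |diagPart (Q k v) m j - diagPart (Q' k v) m j|))
              + ∑ v ∈ Finset.range (k+1),
                ((∑ m, |PiRec Q k v i m - PiRec Q' k v i m| * ∑ j, offdiagPart (Q k v) m j)
                  + ∑ m, PiRec Q' k v i m *
                      ∑ j, |offdiagPart (Q k v) m j - offdiagPart (Q' k v) m j|) := by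
              refine add_le_add (Finset.sum_le_sum fun v hv =>
                hsucc v (Nat.lt_succ_iff.mp (Finset.mem_range.mp hv))) h0
          _ = _ := by
              rw [← Finset.sum_add_distrib]
              refine Finset.sum_congr rfl fun v _ => ?_
              have e1 : (∑ m, |PiRec Q k v i m - PiRec Q' k v i m| * ∑ j, diagPart (Q k v) m j)
                  + (∑ m, |PiRec Q k v i m - PiRec Q' k v i m| * ∑ j, offdiagPart (Q k v) m j)
                  = ∑ m, |PiRec Q k v i m - PiRec Q' k v i m| * ∑ j, Q k v m j := by
                rw [← Finset.sum_add_distrib]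
                refine Finset.sum_congr rfl fun m _ => ?_
                rw [← mul_add, add_comm (∑ j, diagPart (Q k v) m j), rowsum_offdiag_add_diag]
              have e2 : (∑ m, PiRec Q' k v i m * ∑ j, |diagPart (Q k v) m j - diagPart (Q' k v) m j|)
                  + (∑ m, PiRec Q' k v i m
                      * ∑ j, |offdiagPart (Q k v) m j - offdiagPart (Q' k v) m j|)
                  = ∑ m, PiRec Q' k v i m * ∑ j, |Q k v m j - Q' k v m j| := by
                rw [← Finset.sum_add_distrib]
                refine Finset.sum_congr rfl fun m _ => ?_
                rw [← mul_add, add_comm (∑ j, |diagPart (Q k v) m j - diagPart (Q' k v) m j|),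
                  rowsum_absdiff_offdiag_add_diag]
              linarith [e1, e2]
      refine le_trans combine ?_
      calc ∑ v ∈ Finset.range (k+1),
              ((∑ m, |PiRec Q k v i m - PiRec Q' k v i m| * ∑ j, Q k v m j)
                + ∑ m, PiRec Q' k v i m * ∑ j, |Q k v m j - Q' k v m j|)
          ≤ ∑ v ∈ Finset.range (k+1),
              ((∑ m, |PiRec Q k v i m - PiRec Q' k v i m|)
                + Cconst Q Q' (k+1) * ∑ m, PiRec Q' k v i m) := by
            refine Finset.sum_le_sum fun v hv => ?_
            have hvk : v ≤ k := Nat.lt_succ_iff.mp (Finset.mem_range.mp hv)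
            refine add_le_add ?_ ?_
            · refine Finset.sum_le_sum fun m _ => ?_
              calc |PiRec Q k v i m - PiRec Q' k v i m| * ∑ j, Q k v m j
                  ≤ |PiRec Q k v i m - PiRec Q' k v i m| * 1 :=
                    mul_le_mul_of_nonneg_left ((hQ k v hvk).2 m) (abs_nonneg _)
                _ = _ := mul_one _
            · rw [Finset.mul_sum]
              refine Finset.sum_le_sum fun m _ => ?_
              rw [mul_comm (Cconst Q Q' (k+1))]
              exact mul_le_mul_of_nonneg_left
                (le_Cconst Q Q' hQ hQ' hvk (Nat.lt_succ_self k) m)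
                (piRec_nonneg Q' hQ' k v i m)
        _ = (∑ v ∈ Finset.range (k+1), ∑ m, |PiRec Q k v i m - PiRec Q' k v i m|)
            + Cconst Q Q' (k+1) * ∑ v ∈ Finset.range (k+1), ∑ m, PiRec Q' k v i m := by
            rw [Finset.sum_add_distrib, Finset.mul_sum]
        _ ≤ k * Cconst Q Q' k + Cconst Q Q' (k+1) * 1 :=
            add_le_add (ih i) (mul_le_mul_of_nonneg_left (piRec_rowsum Q' hQ' k i)
              (Cconst_nonneg Q Q' hQ hQ' (k+1)))
        _ ≤ (↑(k+1)) * Cconst Q Q' (k+1) := by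
            have hm := Cconst_mono Q Q' hQ hQ' (Nat.le_succ k)
            have hk0 : (0:ℝ) ≤ (k:ℝ) := Nat.cast_nonneg k
            have hmul : (k:ℝ) * Cconst Q Q' k ≤ (k:ℝ) * Cconst Q Q' (k+1) :=
              mul_le_mul_of_nonneg_left hm hk0
            push_cast
            linarith

end MatrixPart


-- summability of k * Poi
lemma summable_nat_mul_Poi (lam : ℝ) : Summable (fun k : ℕ => (k : ℝ) * Poi lam k) := by
  rw [← summable_nat_add_iff 1]
  refine ((summable_Poi lam).mul_left lam).congr fun n => ?_
  have h1 : (Nat.factorial (n+1) : ℝ) = (n+1) * Nat.factorial n := by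
    exact_mod_cast Nat.factorial_succ n
  unfold Poi
  rw [h1]
  have h2 : (Nat.factorial n : ℝ) ≠ 0 := by exact_mod_cast Nat.factorial_ne_zero _
  have h3 : ((n:ℝ) + 1) ≠ 0 := by positivity
  push_cast
  field_simp
  ring

lemma Erl_Poi_conv (γ s x : ℝ) (m : ℕ) :
    ∑ w ∈ Finset.range (m + 1), Erl (m + 1 - w) γ (s - x) * Poi (γ * x) w
      = γ * Poi (γ * s) m := by
  have h : ∀ w ∈ Finset.range (m + 1), Erl (m + 1 - w) γ (s - x) * Poi (γ * x) w
      = γ * (Poi (γ * (s - x)) (m - w) * Poi (γ * x) w) := by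
    intro w hw
    have hwm : w ≤ m := Nat.lt_succ_iff.mp (Finset.mem_range.mp hw)
    rw [Erl_eq_Poi]
    rw [show m + 1 - w - 1 = m - w from by omega]
    ring
  rw [Finset.sum_congr rfl h, ← Finset.mul_sum, Poi_conv]
  rw [show γ * (s - x) + γ * x = γ * s from by ring]

lemma summable_b (γ s x : ℝ) :
    Summable (fun ℓ : ℕ => ∑ w ∈ Finset.range ℓ, Erl (ℓ - w) γ (s - x) * Poi (γ * x) w) := by
  rw [← summable_nat_add_iff 1]
  exact ((summable_Poi (γ * s)).mul_left γ).congr fun m => (Erl_Poi_conv γ s x m).symm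

lemma abs_tsum_le' (f : ℕ → ℝ) (h : Summable (fun n => |f n|)) :
    |∑' n, f n| ≤ ∑' n, |f n| := by
  have h2 : Summable (fun n => ‖f n‖) := by simpa only [Real.norm_eq_abs] using h
  have := norm_tsum_le_tsum_norm h2
  simpa only [Real.norm_eq_abs] using this

lemma continuous_ErlPoi (k w : ℕ) (γ s : ℝ) :
    Continuous fun x : ℝ => Erl k γ (s - x) * Poi (γ * x) w := by
  unfold Erl Poi
  fun_prop

section Main
set_option linter.unusedSectionVars false
variable {J : Type*} [Fintype J] [DecidableEq J]
variable (Q Q' : ℕ → ℕ → Matrix J J ℝ)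

lemma E_nonneg (ℓ w : ℕ) (i : J) :
    0 ≤ ∑ j, |PiRec Q ℓ w i j - PiRec Q' ℓ w i j| :=
  Finset.sum_nonneg fun j _ => abs_nonneg _

lemma E_le_two (hQ : ∀ ℓ w, w ≤ ℓ → RowSubstochastic (Q ℓ w))
    (hQ' : ∀ ℓ w, w ≤ ℓ → RowSubstochastic (Q' ℓ w)) {ℓ w : ℕ} (hw : w ≤ ℓ) (i : J) :
    ∑ j, |PiRec Q ℓ w i j - PiRec Q' ℓ w i j| ≤ 2 := by
  calc ∑ j, |PiRec Q ℓ w i j - PiRec Q' ℓ w i j|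
      ≤ ∑ j, (PiRec Q ℓ w i j + PiRec Q' ℓ w i j) := by
        refine Finset.sum_le_sum fun j _ => ?_
        have h1 := piRec_nonneg Q hQ ℓ w i j
        have h2 := piRec_nonneg Q' hQ' ℓ w i j
        rw [abs_sub_le_iff]; constructor <;> linarith
    _ = (∑ j, PiRec Q ℓ w i j) + ∑ j, PiRec Q' ℓ w i j := Finset.sum_add_distrib
    _ ≤ 1 + 1 := add_le_add (piRec_rowsum_single Q hQ hw i) (piRec_rowsum_single Q' hQ' hw i)
    _ = 2 := by norm_num

lemma T_le_two (hQ : ∀ ℓ w, w ≤ ℓ → RowSubstochastic (Q ℓ w))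
    (hQ' : ∀ ℓ w, w ≤ ℓ → RowSubstochastic (Q' ℓ w)) (ℓ : ℕ) (i : J) :
    ∑ w ∈ Finset.range ℓ, ∑ j, |PiRec Q ℓ w i j - PiRec Q' ℓ w i j| ≤ 2 := by
  have hsub : ∀ (R : ℕ → ℕ → Matrix J J ℝ), (∀ ℓ w, w ≤ ℓ → RowSubstochastic (R ℓ w)) →
      ∑ w ∈ Finset.range ℓ, ∑ j, PiRec R ℓ w i j ≤ 1 := by
    intro R hR
    refine le_trans (Finset.sum_le_sum_of_subset_of_nonneg
      (Finset.range_subset_range.mpr (Nat.le_succ ℓ))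
      (fun w _ _ => Finset.sum_nonneg fun j _ => piRec_nonneg R hR ℓ w i j))
      (piRec_rowsum R hR ℓ i)
  calc ∑ w ∈ Finset.range ℓ, ∑ j, |PiRec Q ℓ w i j - PiRec Q' ℓ w i j|
      ≤ ∑ w ∈ Finset.range ℓ, ((∑ j, PiRec Q ℓ w i j) + ∑ j, PiRec Q' ℓ w i j) := by
        refine Finset.sum_le_sum fun w hw => ?_
        rw [← Finset.sum_add_distrib]
        refine Finset.sum_le_sum fun j _ => ?_
        have h1 := piRec_nonneg Q hQ ℓ w i j
        have h2 := piRec_nonneg Q' hQ' ℓ w i j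
        rw [abs_sub_le_iff]; constructor <;> linarith
    _ = (∑ w ∈ Finset.range ℓ, ∑ j, PiRec Q ℓ w i j)
        + ∑ w ∈ Finset.range ℓ, ∑ j, PiRec Q' ℓ w i j := Finset.sum_add_distrib
    _ ≤ 1 + 1 := add_le_add (hsub Q hQ) (hsub Q' hQ')
    _ = 2 := by norm_num

lemma T_le_C [Nonempty J] (hQ : ∀ ℓ w, w ≤ ℓ → RowSubstochastic (Q ℓ w))
    (hQ' : ∀ ℓ w, w ≤ ℓ → RowSubstochastic (Q' ℓ w)) (ℓ : ℕ) (i : J) :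
    ∑ w ∈ Finset.range ℓ, ∑ j, |PiRec Q ℓ w i j - PiRec Q' ℓ w i j|
      ≤ ℓ * Cconst Q Q' ℓ := by
  refine le_trans (Finset.sum_le_sum_of_subset_of_nonneg
    (Finset.range_subset_range.mpr (Nat.le_succ ℓ))
    (fun w _ _ => E_nonneg Q Q' ℓ w i)) (piRec_diff Q Q' hQ hQ' ℓ i)

lemma pointwise_bound (hQ : ∀ ℓ w, w ≤ ℓ → RowSubstochastic (Q ℓ w))
    (hQ' : ∀ ℓ w, w ≤ ℓ → RowSubstochastic (Q' ℓ w)) {γ s x : ℝ} (hγ : 0 < γ)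
    (hx : 0 ≤ x) (hxs : x ≤ s) (i : J) :
    ∑ j, |pCont γ (PiRec Q) s x i j - pCont γ (PiRec Q') s x i j|
      ≤ ∑' ℓ : ℕ, ∑ w ∈ Finset.range ℓ, Erl (ℓ - w) γ (s - x) * Poi (γ * x) w
          * ∑ j, |PiRec Q ℓ w i j - PiRec Q' ℓ w i j| := by
  have hErl : ∀ k : ℕ, 0 ≤ Erl k γ (s - x) := fun k => Erl_nonneg hγ.le (by linarith) k
  have hPoi : ∀ w : ℕ, 0 ≤ Poi (γ * x) w := fun w => Poi_nonneg (by positivity) w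
  have hsb := summable_b γ s x
  have hXgen : ∀ (R : ℕ → ℕ → Matrix J J ℝ), (∀ ℓ w, w ≤ ℓ → RowSubstochastic (R ℓ w)) →
      ∀ j, Summable (fun ℓ : ℕ => ∑ w ∈ Finset.range ℓ,
        Erl (ℓ - w) γ (s - x) * Poi (γ * x) w * PiRec R ℓ w i j) := by
    intro R hR j
    refine Summable.of_nonneg_of_le (fun ℓ => Finset.sum_nonneg fun w hw =>
      mul_nonneg (mul_nonneg (hErl _) (hPoi _)) (piRec_nonneg R hR ℓ w i j))
      (fun ℓ => ?_) hsb
    refine Finset.sum_le_sum fun w hw => ?_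
    have hwl : w ≤ ℓ := le_of_lt (Finset.mem_range.mp hw)
    calc Erl (ℓ - w) γ (s - x) * Poi (γ * x) w * PiRec R ℓ w i j
        ≤ Erl (ℓ - w) γ (s - x) * Poi (γ * x) w * 1 :=
          mul_le_mul_of_nonneg_left (piRec_entry_le_one R hR hwl i j)
            (mul_nonneg (hErl _) (hPoi _))
      _ = Erl (ℓ - w) γ (s - x) * Poi (γ * x) w := mul_one _
  have hX := hXgen Q hQ
  have hY := hXgen Q' hQ'
  have hcle : ∀ j ℓ, (∑ w ∈ Finset.range ℓ, Erl (ℓ - w) γ (s - x) * Poi (γ * x) w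
      * |PiRec Q ℓ w i j - PiRec Q' ℓ w i j|)
      ≤ ∑ w ∈ Finset.range ℓ, Erl (ℓ - w) γ (s - x) * Poi (γ * x) w := by
    intro j ℓ
    refine Finset.sum_le_sum fun w hw => ?_
    have hwl : w ≤ ℓ := le_of_lt (Finset.mem_range.mp hw)
    have h1 := piRec_nonneg Q hQ ℓ w i j
    have h2 := piRec_nonneg Q' hQ' ℓ w i j
    have h3 := piRec_entry_le_one Q hQ hwl i j
    have h4 := piRec_entry_le_one Q' hQ' hwl i j
    have habs : |PiRec Q ℓ w i j - PiRec Q' ℓ w i j| ≤ 1 := by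
      rw [abs_sub_le_iff]; constructor <;> linarith
    calc Erl (ℓ - w) γ (s - x) * Poi (γ * x) w * |PiRec Q ℓ w i j - PiRec Q' ℓ w i j|
        ≤ Erl (ℓ - w) γ (s - x) * Poi (γ * x) w * 1 :=
          mul_le_mul_of_nonneg_left habs (mul_nonneg (hErl _) (hPoi _))
      _ = _ := mul_one _
  have hc : ∀ j, Summable (fun ℓ : ℕ => ∑ w ∈ Finset.range ℓ,
      Erl (ℓ - w) γ (s - x) * Poi (γ * x) w * |PiRec Q ℓ w i j - PiRec Q' ℓ w i j|) := by
    intro j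
    exact Summable.of_nonneg_of_le (fun ℓ => Finset.sum_nonneg fun w hw =>
      mul_nonneg (mul_nonneg (hErl _) (hPoi _)) (abs_nonneg _)) (hcle j) hsb
  have hperj : ∀ j, |pCont γ (PiRec Q) s x i j - pCont γ (PiRec Q') s x i j|
      ≤ ∑' ℓ : ℕ, ∑ w ∈ Finset.range ℓ,
          Erl (ℓ - w) γ (s - x) * Poi (γ * x) w * |PiRec Q ℓ w i j - PiRec Q' ℓ w i j| := by
    intro j
    have hd : pCont γ (PiRec Q) s x i j - pCont γ (PiRec Q') s x i j
        = ∑' ℓ : ℕ, ((∑ w ∈ Finset.range ℓ,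
            Erl (ℓ - w) γ (s - x) * Poi (γ * x) w * PiRec Q ℓ w i j)
          - ∑ w ∈ Finset.range ℓ,
            Erl (ℓ - w) γ (s - x) * Poi (γ * x) w * PiRec Q' ℓ w i j) := by
      rw [Summable.tsum_sub (hX j) (hY j)]
      rfl
    rw [hd]
    have hterm : ∀ ℓ : ℕ, |(∑ w ∈ Finset.range ℓ,
          Erl (ℓ - w) γ (s - x) * Poi (γ * x) w * PiRec Q ℓ w i j)
        - ∑ w ∈ Finset.range ℓ, Erl (ℓ - w) γ (s - x) * Poi (γ * x) w * PiRec Q' ℓ w i j|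
        ≤ ∑ w ∈ Finset.range ℓ,
            Erl (ℓ - w) γ (s - x) * Poi (γ * x) w * |PiRec Q ℓ w i j - PiRec Q' ℓ w i j| := by
      intro ℓ
      rw [← Finset.sum_sub_distrib]
      refine (Finset.abs_sum_le_sum_abs _ _).trans (Finset.sum_le_sum fun w hw => ?_)
      rw [← mul_sub, abs_mul, abs_of_nonneg (mul_nonneg (hErl _) (hPoi _))]
    have habs : Summable (fun ℓ : ℕ => |(∑ w ∈ Finset.range ℓ,
          Erl (ℓ - w) γ (s - x) * Poi (γ * x) w * PiRec Q ℓ w i j)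
        - ∑ w ∈ Finset.range ℓ, Erl (ℓ - w) γ (s - x) * Poi (γ * x) w * PiRec Q' ℓ w i j|) :=
      Summable.of_nonneg_of_le (fun ℓ => abs_nonneg _)
        (fun ℓ => (hterm ℓ).trans (hcle j ℓ)) hsb
    exact le_trans (abs_tsum_le' _ habs) (Summable.tsum_le_tsum hterm habs (hc j))
  calc ∑ j, |pCont γ (PiRec Q) s x i j - pCont γ (PiRec Q') s x i j|
      ≤ ∑ j, ∑' ℓ : ℕ, ∑ w ∈ Finset.range ℓ,
          Erl (ℓ - w) γ (s - x) * Poi (γ * x) w * |PiRec Q ℓ w i j - PiRec Q' ℓ w i j| :=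
        Finset.sum_le_sum fun j _ => hperj j
    _ = ∑' ℓ : ℕ, ∑ j, ∑ w ∈ Finset.range ℓ,
          Erl (ℓ - w) γ (s - x) * Poi (γ * x) w * |PiRec Q ℓ w i j - PiRec Q' ℓ w i j| :=
        (Summable.tsum_finsetSum fun j _ => hc j).symm
    _ = _ := by
        refine tsum_congr fun ℓ => ?_
        rw [Finset.sum_comm]
        exact Finset.sum_congr rfl fun w _ => by rw [Finset.mul_sum]

lemma a_integral_bound (hQ : ∀ ℓ w, w ≤ ℓ → RowSubstochastic (Q ℓ w))
    (hQ' : ∀ ℓ w, w ≤ ℓ → RowSubstochastic (Q' ℓ w)) {γ v s : ℝ} (hγ : 0 < γ)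
    (hv : 0 ≤ v) (hvs : v ≤ s) (i : J) (ℓ : ℕ) :
    (∫ x in (0:ℝ)..v, ∑ w ∈ Finset.range ℓ, Erl (ℓ - w) γ (s - x) * Poi (γ * x) w
        * ∑ j, |PiRec Q ℓ w i j - PiRec Q' ℓ w i j|)
      ≤ Poi (γ * s) ℓ * ∑ w ∈ Finset.range ℓ, ∑ j, |PiRec Q ℓ w i j - PiRec Q' ℓ w i j| := by
  rw [intervalIntegral.integral_finset_sum (f := fun w x => Erl (ℓ - w) γ (s - x) * Poi (γ * x) w
      * ∑ j, |PiRec Q ℓ w i j - PiRec Q' ℓ w i j|) (fun w hw =>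
    ((continuous_ErlPoi (ℓ - w) w γ s).mul continuous_const).intervalIntegrable 0 v)]
  rw [Finset.mul_sum]
  refine Finset.sum_le_sum fun w hw => ?_
  have hwl : w < ℓ := Finset.mem_range.mp hw
  rw [intervalIntegral.integral_mul_const]
  refine mul_le_mul_of_nonneg_right ?_ (E_nonneg Q Q' ℓ w i)
  obtain ⟨k, hk⟩ : ∃ k, ℓ - w = k + 1 := ⟨ℓ - w - 1, by omega⟩
  rw [hk, show ℓ = w + k + 1 from by omega]
  exact key_integral' hγ hv hvs w k

end Main


theorem pCont_difference_integral_bound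
    {J : Type*} [Fintype J] [DecidableEq J] [Nonempty J]
    (Q Q' : ℕ → ℕ → Matrix J J ℝ)
    (hQ : ∀ ℓ w, w ≤ ℓ → RowSubstochastic (Q ℓ w))
    (hQ' : ∀ ℓ w, w ≤ ℓ → RowSubstochastic (Q' ℓ w))
    (γ : ℝ) (hγ : 0 < γ) (v s : ℝ) (hv : 0 ≤ v) (hvs : v ≤ s) (i : J) (N : ℕ) :
    (∫ v' in (0:ℝ)..v,
        ∑ j, |pCont γ (PiRec Q) s v' i j - pCont γ (PiRec Q') s v' i j|) ≤
      γ * s * Cconst Q Q' N + 2 * ∑' ℓ : ℕ, Poi (γ * s) (N + 1 + ℓ) := by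
  classical
  have hs : 0 ≤ s := le_trans hv hvs
  have hlam0 : 0 ≤ γ * s := by positivity
  -- abbreviations (as plain functions)
  set T : ℕ → ℝ := fun ℓ => ∑ w ∈ Finset.range ℓ, ∑ j, |PiRec Q ℓ w i j - PiRec Q' ℓ w i j|
    with hTdef
  set a : ℕ → ℝ → ℝ := fun ℓ x => ∑ w ∈ Finset.range ℓ,
    Erl (ℓ - w) γ (s - x) * Poi (γ * x) w * ∑ j, |PiRec Q ℓ w i j - PiRec Q' ℓ w i j|
    with hadef
  have hT0 : ∀ ℓ, 0 ≤ T ℓ := fun ℓ => Finset.sum_nonneg fun w _ => E_nonneg Q Q' ℓ w i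
  have hT2 : ∀ ℓ, T ℓ ≤ 2 := fun ℓ => T_le_two Q Q' hQ hQ' ℓ i
  have hPT0 : ∀ ℓ, 0 ≤ Poi (γ * s) ℓ * T ℓ :=
    fun ℓ => mul_nonneg (Poi_nonneg hlam0 ℓ) (hT0 ℓ)
  have hsumPT : Summable (fun ℓ => Poi (γ * s) ℓ * T ℓ) := by
    refine Summable.of_nonneg_of_le hPT0 (fun ℓ => ?_) ((summable_Poi (γ * s)).mul_right 2)
    exact mul_le_mul_of_nonneg_left (hT2 ℓ) (Poi_nonneg hlam0 ℓ)
  set R : ℝ := ∑' ℓ, Poi (γ * s) ℓ * T ℓ with hRdef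
  have hR0 : 0 ≤ R := tsum_nonneg hPT0
  -- continuity and nonnegativity of a ℓ
  have hacont : ∀ ℓ : ℕ, Continuous (a ℓ) := fun ℓ =>
    continuous_finset_sum _ fun w _ => (continuous_ErlPoi (ℓ - w) w γ s).mul continuous_const
  have ha0 : ∀ ℓ : ℕ, ∀ x : ℝ, 0 ≤ x → x ≤ s → 0 ≤ a ℓ x := by
    intro ℓ x hx hxs
    refine Finset.sum_nonneg fun w _ => ?_
    have := Erl_nonneg hγ.le (by linarith : (0:ℝ) ≤ s - x) (ℓ - w)
    have := Poi_nonneg (by positivity : (0:ℝ) ≤ γ * x) w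
    have := E_nonneg Q Q' ℓ w i
    positivity
  have hsa : ∀ x : ℝ, 0 ≤ x → x ≤ s → Summable (fun ℓ => a ℓ x) := by
    intro x hx hxs
    have hErl : ∀ k : ℕ, 0 ≤ Erl k γ (s - x) := fun k => Erl_nonneg hγ.le (by linarith) k
    have hPoi : ∀ w : ℕ, 0 ≤ Poi (γ * x) w := fun w => Poi_nonneg (by positivity) w
    refine Summable.of_nonneg_of_le (fun ℓ => ha0 ℓ x hx hxs) (fun ℓ => ?_)
      ((summable_b γ s x).mul_right 2)
    rw [Finset.sum_mul]
    refine Finset.sum_le_sum fun w hw => ?_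
    have hwl : w ≤ ℓ := le_of_lt (Finset.mem_range.mp hw)
    exact mul_le_mul_of_nonneg_left (E_le_two Q Q' hQ hQ' hwl i)
      (mul_nonneg (hErl _) (hPoi _))
  -- the main lintegral bound
  have hmain : (∫ v' in (0:ℝ)..v,
      ∑ j, |pCont γ (PiRec Q) s v' i j - pCont γ (PiRec Q') s v' i j|) ≤ R := by
    rw [intervalIntegral.integral_of_le hv]
    have key : (∫⁻ x in Set.Ioc (0:ℝ) v, ENNReal.ofReal
        ‖∑ j, |pCont γ (PiRec Q) s x i j - pCont γ (PiRec Q') s x i j|‖) ≤ ENNReal.ofReal R := by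
      have step1 : (∫⁻ x in Set.Ioc (0:ℝ) v, ENNReal.ofReal
          ‖∑ j, |pCont γ (PiRec Q) s x i j - pCont γ (PiRec Q') s x i j|‖)
          ≤ ∫⁻ x in Set.Ioc (0:ℝ) v, ∑' ℓ, ENNReal.ofReal (a ℓ x) := by
        refine MeasureTheory.lintegral_mono_ae ?_
        filter_upwards [MeasureTheory.ae_restrict_mem measurableSet_Ioc] with x hx
        have hx0 : 0 ≤ x := le_of_lt hx.1
        have hxs : x ≤ s := le_trans hx.2 hvs
        have hF0 : 0 ≤ ∑ j, |pCont γ (PiRec Q) s x i j - pCont γ (PiRec Q') s x i j| :=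
          Finset.sum_nonneg fun j _ => abs_nonneg _
        rw [Real.norm_eq_abs, abs_of_nonneg hF0]
        calc ENNReal.ofReal (∑ j, |pCont γ (PiRec Q) s x i j - pCont γ (PiRec Q') s x i j|)
            ≤ ENNReal.ofReal (∑' ℓ, a ℓ x) :=
              ENNReal.ofReal_le_ofReal (pointwise_bound Q Q' hQ hQ' hγ hx0 hxs i)
          _ = ∑' ℓ, ENNReal.ofReal (a ℓ x) :=
              ENNReal.ofReal_tsum_of_nonneg (fun ℓ => ha0 ℓ x hx0 hxs) (hsa x hx0 hxs)
      have step2 : (∫⁻ x in Set.Ioc (0:ℝ) v, ∑' ℓ, ENNReal.ofReal (a ℓ x))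
          = ∑' ℓ, ∫⁻ x in Set.Ioc (0:ℝ) v, ENNReal.ofReal (a ℓ x) :=
        MeasureTheory.lintegral_tsum fun ℓ =>
          ((hacont ℓ).measurable.ennreal_ofReal).aemeasurable
      have step3 : ∀ ℓ : ℕ, (∫⁻ x in Set.Ioc (0:ℝ) v, ENNReal.ofReal (a ℓ x))
          = ENNReal.ofReal (∫ x in Set.Ioc (0:ℝ) v, a ℓ x) := by
        intro ℓ
        have hint : MeasureTheory.IntegrableOn (a ℓ) (Set.Ioc (0:ℝ) v) := by
          rw [← intervalIntegrable_iff_integrableOn_Ioc_of_le hv]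
          exact (hacont ℓ).intervalIntegrable 0 v
        have hnn : 0 ≤ᵐ[MeasureTheory.volume.restrict (Set.Ioc (0:ℝ) v)] a ℓ := by
          filter_upwards [MeasureTheory.ae_restrict_mem measurableSet_Ioc] with x hx
          exact ha0 ℓ x (le_of_lt hx.1) (le_trans hx.2 hvs)
        exact (MeasureTheory.ofReal_integral_eq_lintegral_ofReal hint hnn).symm
      have step4 : ∀ ℓ : ℕ, (∫ x in Set.Ioc (0:ℝ) v, a ℓ x) ≤ Poi (γ * s) ℓ * T ℓ := by
        intro ℓ
        rw [← intervalIntegral.integral_of_le hv]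
        exact a_integral_bound Q Q' hQ hQ' hγ hv hvs i ℓ
      calc (∫⁻ x in Set.Ioc (0:ℝ) v, ENNReal.ofReal
            ‖∑ j, |pCont γ (PiRec Q) s x i j - pCont γ (PiRec Q') s x i j|‖)
          ≤ ∫⁻ x in Set.Ioc (0:ℝ) v, ∑' ℓ, ENNReal.ofReal (a ℓ x) := step1
        _ = ∑' ℓ, ∫⁻ x in Set.Ioc (0:ℝ) v, ENNReal.ofReal (a ℓ x) := step2
        _ ≤ ∑' ℓ, ENNReal.ofReal (Poi (γ * s) ℓ * T ℓ) := by
            refine ENNReal.tsum_le_tsum fun ℓ => ?_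
            rw [step3 ℓ]
            exact ENNReal.ofReal_le_ofReal (step4 ℓ)
        _ = ENNReal.ofReal R := (ENNReal.ofReal_tsum_of_nonneg hPT0 hsumPT).symm
    calc (∫ x in Set.Ioc (0:ℝ) v,
          ∑ j, |pCont γ (PiRec Q) s x i j - pCont γ (PiRec Q') s x i j|)
        ≤ ‖∫ x in Set.Ioc (0:ℝ) v,
            ∑ j, |pCont γ (PiRec Q) s x i j - pCont γ (PiRec Q') s x i j|‖ :=
          le_abs_self _
      _ ≤ (∫⁻ x in Set.Ioc (0:ℝ) v, ENNReal.ofReal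
            ‖∑ j, |pCont γ (PiRec Q) s x i j - pCont γ (PiRec Q') s x i j|‖).toReal :=
          MeasureTheory.norm_integral_le_lintegral_norm _
      _ ≤ R := ENNReal.toReal_le_of_le_ofReal hR0 key
  -- final arithmetic on R
  have hfinal : R ≤ γ * s * Cconst Q Q' N + 2 * ∑' ℓ : ℕ, Poi (γ * s) (N + 1 + ℓ) := by
    have hsplit := Summable.sum_add_tsum_nat_add (f := fun ℓ => Poi (γ * s) ℓ * T ℓ) (N + 1) hsumPT
    have h1 : (∑ ℓ ∈ Finset.range (N + 1), Poi (γ * s) ℓ * T ℓ) ≤ γ * s * Cconst Q Q' N := by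
      have hC0 : 0 ≤ Cconst Q Q' N := Cconst_nonneg Q Q' hQ hQ' N
      calc (∑ ℓ ∈ Finset.range (N + 1), Poi (γ * s) ℓ * T ℓ)
          ≤ ∑ ℓ ∈ Finset.range (N + 1), Poi (γ * s) ℓ * ((ℓ : ℝ) * Cconst Q Q' N) := by
            refine Finset.sum_le_sum fun ℓ hℓ => ?_
            have hℓN : ℓ ≤ N := Nat.lt_succ_iff.mp (Finset.mem_range.mp hℓ)
            refine mul_le_mul_of_nonneg_left ?_ (Poi_nonneg hlam0 ℓ)
            calc T ℓ ≤ ℓ * Cconst Q Q' ℓ := T_le_C Q Q' hQ hQ' ℓ i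
              _ ≤ ℓ * Cconst Q Q' N :=
                mul_le_mul_of_nonneg_left (Cconst_mono Q Q' hQ hQ' hℓN) (Nat.cast_nonneg ℓ)
        _ = Cconst Q Q' N * ∑ ℓ ∈ Finset.range (N + 1), (ℓ : ℝ) * Poi (γ * s) ℓ := by
            rw [Finset.mul_sum]
            exact Finset.sum_congr rfl fun ℓ _ => by ring
        _ ≤ Cconst Q Q' N * (γ * s) := by
            refine mul_le_mul_of_nonneg_left ?_ hC0
            have := Summable.sum_le_tsum (Finset.range (N + 1))
              (fun ℓ _ => mul_nonneg (Nat.cast_nonneg ℓ) (Poi_nonneg hlam0 ℓ))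
              (summable_nat_mul_Poi (γ * s))
            rwa [tsum_nat_mul_Poi (γ * s)] at this
        _ = γ * s * Cconst Q Q' N := mul_comm _ _
    have h2 : (∑' ℓ : ℕ, Poi (γ * s) (ℓ + (N + 1)) * T (ℓ + (N + 1)))
        ≤ 2 * ∑' ℓ : ℕ, Poi (γ * s) (N + 1 + ℓ) := by
      have hsumL : Summable (fun ℓ : ℕ => Poi (γ * s) (ℓ + (N + 1)) * T (ℓ + (N + 1))) :=
        (summable_nat_add_iff (f := fun ℓ : ℕ => Poi (γ * s) ℓ * T ℓ) (N + 1)).mpr hsumPT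
      have hsumR : Summable (fun ℓ : ℕ => 2 * Poi (γ * s) (N + 1 + ℓ)) := by
        refine (((summable_nat_add_iff (f := Poi (γ * s)) (N + 1)).mpr
          (summable_Poi (γ * s))).mul_left 2).congr fun ℓ => ?_
        rw [add_comm ℓ (N + 1)]
      calc (∑' ℓ : ℕ, Poi (γ * s) (ℓ + (N + 1)) * T (ℓ + (N + 1)))
          ≤ ∑' ℓ : ℕ, 2 * Poi (γ * s) (N + 1 + ℓ) := by
            refine Summable.tsum_le_tsum (fun ℓ => ?_) hsumL hsumR
            rw [add_comm (N + 1) ℓ]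
            calc Poi (γ * s) (ℓ + (N + 1)) * T (ℓ + (N + 1))
                ≤ Poi (γ * s) (ℓ + (N + 1)) * 2 :=
                  mul_le_mul_of_nonneg_left (hT2 _) (Poi_nonneg hlam0 _)
              _ = 2 * Poi (γ * s) (ℓ + (N + 1)) := mul_comm _ _
        _ = 2 * ∑' ℓ : ℕ, Poi (γ * s) (N + 1 + ℓ) := tsum_mul_left
    calc R = (∑ ℓ ∈ Finset.range (N + 1), Poi (γ * s) ℓ * T ℓ)
          + ∑' ℓ : ℕ, Poi (γ * s) (ℓ + (N + 1)) * T (ℓ + (N + 1)) := by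
          rw [hRdef, ← hsplit]
      _ ≤ γ * s * Cconst Q Q' N + 2 * ∑' ℓ : ℕ, Poi (γ * s) (N + 1 + ℓ) := add_le_add h1 h2
  exact le_trans hmain hfinal

end
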